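/- arXiv:1902.09005 — 5 statements merged into one kernel-verified Lean document; each statement's English description precedes it below -/
import Mathlib

section
/- Let (Z_{k,n})_{k,n∈ℕ} be a family of real-valued random variables satisfying assumptions AS1 and AS2, with limiting random variables (Z_k)_{k∈ℕ}. Then the limit lim_{n→∞} ( p-liminf_{k→∞} Z_{k,n} ) exists and p-liminf_{k→∞} Z_k = lim_{n→∞} ( p-liminf_{k→∞} Z_{k,n} ). -/
open MeasureTheory Filter Topology

/-- The CDF of a real random variable `Z` under the measure `μ`, evaluated at `α`,
using the convention `F(α) = P(Z < α)`. -/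
noncomputable def cdfLt {Ω : Type*} [MeasurableSpace Ω] (μ : Measure Ω) (Z : Ω → ℝ)
    (α : ℝ) : ℝ :=
  (μ {ω | Z ω < α}).toReal

/-- The limit-inferior in probability of a sequence of real random variables:
`p-liminf_{k→∞} Z_k = sup {α ∈ ℝ | lim_{k→∞} P(Z_k < α) = 0}`. -/
noncomputable def pliminf {Ω : Type*} [MeasurableSpace Ω] (μ : Measure Ω)
    (Z : ℕ → Ω → ℝ) : ℝ :=
  sSup {α : ℝ | Tendsto (fun k => cdfLt μ (Z k) α) atTop (nhds 0)}

lemma cdfLt_mem_Icc {Ω : Type*} [MeasurableSpace Ω] (μ : Measure Ω) [IsProbabilityMeasure μ]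
    (W : Ω → ℝ) (α : ℝ) : cdfLt μ W α ∈ Set.Icc (0:ℝ) 1 := by
  constructor
  · exact ENNReal.toReal_nonneg
  · have h := prob_le_one (μ := μ) (s := {ω | W ω < α})
    calc (μ {ω | W ω < α}).toReal ≤ (1 : ENNReal).toReal :=
          ENNReal.toReal_mono ENNReal.one_ne_top h
      _ = 1 := ENNReal.toReal_one

lemma cdfLt_mono {Ω : Type*} [MeasurableSpace Ω] (μ : Measure Ω) [IsProbabilityMeasure μ]
    (W : Ω → ℝ) : Monotone (cdfLt μ W) := by
  intro a b hab
  exact ENNReal.toReal_mono (measure_ne_top μ _)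
    (measure_mono fun ω hω => lt_of_lt_of_le hω hab)

lemma exists_subseq_tendsto_coord (v : ℕ → ℕ → ℝ) (hv : ∀ k i, v k i ∈ Set.Icc (0:ℝ) 1) :
    ∃ φ : ℕ → ℕ, StrictMono φ ∧ ∃ g : ℕ → ℝ,
      ∀ i, Tendsto (fun l => v (φ l) i) atTop (𝓝 (g i)) := by
  let x : ℕ → (ℕ → Set.Icc (0:ℝ) 1) := fun k i => ⟨v k i, hv k i⟩
  obtain ⟨a, φ, hφ, ha⟩ := SeqCompactSpace.tendsto_subseq x
  refine ⟨φ, hφ, fun i => (a i : ℝ), fun i => ?_⟩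
  have h1 : Tendsto (fun l => (x ∘ φ) l i) atTop (𝓝 (a i)) := tendsto_pi_nhds.mp ha i
  exact (continuous_subtype_val.tendsto (a i)).comp h1

/-- Helly-type selection: a sequence of monotone `[0,1]`-valued functions on `ℝ` has a
subsequence converging pointwise everywhere. -/
lemma helly_selection (u : ℕ → ℝ → ℝ) (hmono : ∀ k, Monotone (u k))
    (hmem : ∀ k α, u k α ∈ Set.Icc (0:ℝ) 1) :
    ∃ φ : ℕ → ℕ, StrictMono φ ∧ ∃ G : ℝ → ℝ,
      ∀ α, Tendsto (fun l => u (φ l) α) atTop (𝓝 (G α)) := by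
  classical
  let e : ℕ ≃ ℚ := (Denumerable.eqv ℚ).symm
  obtain ⟨φ₁, hφ₁, g₁, hg₁⟩ := exists_subseq_tendsto_coord
    (fun k i => u k ((e i : ℚ) : ℝ)) (fun k i => hmem k _)
  set g : ℚ → ℝ := fun q => g₁ (e.symm q) with hgdef
  have hg : ∀ q : ℚ, Tendsto (fun l => u (φ₁ l) (q : ℝ)) atTop (𝓝 (g q)) := by
    intro q
    have := hg₁ (e.symm q)
    simpa [hgdef, e.apply_symm_apply] using this
  have hg01 : ∀ q : ℚ, g q ∈ Set.Icc (0:ℝ) 1 := fun q =>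
    isClosed_Icc.mem_of_tendsto (hg q) (Eventually.of_forall fun l => hmem _ _)
  set Gm : ℝ → ℝ := fun α => sSup (g '' {q : ℚ | (q:ℝ) < α}) with hGm
  set Gp : ℝ → ℝ := fun α => sInf (g '' {q : ℚ | α < (q:ℝ)}) with hGp
  have hne_lt : ∀ α : ℝ, (g '' {q : ℚ | (q:ℝ) < α}).Nonempty := by
    intro α; obtain ⟨q, hq⟩ := exists_rat_lt α; exact ⟨g q, ⟨q, hq, rfl⟩⟩
  have hne_gt : ∀ α : ℝ, (g '' {q : ℚ | α < (q:ℝ)}).Nonempty := by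
    intro α; obtain ⟨q, hq⟩ := exists_rat_gt α; exact ⟨g q, ⟨q, hq, rfl⟩⟩
  have hbddA : ∀ α : ℝ, BddAbove (g '' {q : ℚ | (q:ℝ) < α}) := by
    intro α; exact ⟨1, by rintro y ⟨q, -, rfl⟩; exact (hg01 q).2⟩
  have hbddB : ∀ α : ℝ, BddBelow (g '' {q : ℚ | α < (q:ℝ)}) := by
    intro α; exact ⟨0, by rintro y ⟨q, -, rfl⟩; exact (hg01 q).1⟩
  have hGpGm : ∀ α β : ℝ, α < β → Gp α ≤ Gm β := by
    intro α β hab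
    obtain ⟨q, hq1, hq2⟩ := exists_rat_btwn hab
    calc Gp α ≤ g q := csInf_le (hbddB α) ⟨q, hq1, rfl⟩
      _ ≤ Gm β := le_csSup (hbddA β) ⟨q, hq2, rfl⟩
  set D : Set ℝ := {α | Gm α < Gp α} with hD
  have hDcount : D.Countable := by
    have hsub : D ⊆ ⋃ q : ℚ, {α : ℝ | Gm α < (q:ℝ) ∧ (q:ℝ) < Gp α} := by
      intro α hα
      obtain ⟨q, hq1, hq2⟩ := exists_rat_btwn (show Gm α < Gp α from hα)
      exact Set.mem_iUnion.mpr ⟨q, hq1, hq2⟩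
    refine Set.Countable.mono hsub (Set.countable_iUnion fun q => ?_)
    refine Set.Subsingleton.countable ?_
    intro α hα β hβ
    by_contra hne
    rcases lt_or_gt_of_ne hne with h | h
    · exact absurd (hα.2.trans_le (hGpGm α β h) |>.trans hβ.1) (lt_irrefl _)
    · exact absurd (hβ.2.trans_le (hGpGm β α h) |>.trans hα.1) (lt_irrefl _)
  obtain ⟨e2, he2⟩ := (hDcount.insert 0).exists_eq_range (Set.insert_nonempty _ _)
  have hDe2 : ∀ α ∈ D, ∃ i, e2 i = α := by
    intro α hα
    have : α ∈ Set.range e2 := he2 ▸ Set.mem_insert_of_mem _ hα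
    obtain ⟨i, hi⟩ := this; exact ⟨i, hi⟩
  obtain ⟨φ₂, hφ₂, g₂, hg₂⟩ := exists_subseq_tendsto_coord
    (fun l i => u (φ₁ l) (e2 i)) (fun l i => hmem _ _)
  set φ : ℕ → ℕ := φ₁ ∘ φ₂ with hφdef
  have hφ : StrictMono φ := hφ₁.comp hφ₂
  have hgφ : ∀ q : ℚ, Tendsto (fun l => u (φ l) (q : ℝ)) atTop (𝓝 (g q)) :=
    fun q => (hg q).comp hφ₂.tendsto_atTop
  have hbd1 : ∀ α, IsBoundedUnder (· ≤ ·) atTop (fun l => u (φ l) α) :=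
    fun α => isBoundedUnder_of ⟨1, fun l => (hmem _ _).2⟩
  have hbd2 : ∀ α, IsBoundedUnder (· ≥ ·) atTop (fun l => u (φ l) α) :=
    fun α => isBoundedUnder_of ⟨0, fun l => (hmem _ _).1⟩
  have key : ∀ α : ℝ, ∃ x : ℝ, Tendsto (fun l => u (φ l) α) atTop (𝓝 x) := by
    intro α
    by_cases hαD : α ∈ D
    · obtain ⟨i, hi⟩ := hDe2 α hαD
      exact ⟨g₂ i, by simpa [hi, hφdef] using hg₂ i⟩
    · have hle : Gm α ≤ liminf (fun l => u (φ l) α) atTop := by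
        refine csSup_le (hne_lt α) ?_
        rintro y ⟨q, hq, rfl⟩
        have h1 : g q = liminf (fun l => u (φ l) (q:ℝ)) atTop := (hgφ q).liminf_eq.symm
        rw [h1]
        refine liminf_le_liminf (Eventually.of_forall fun l => hmono _ (le_of_lt hq))
          (isBoundedUnder_of ⟨0, fun l => (hmem _ _).1⟩)
          ((hbd1 α).isCoboundedUnder_flip)
      have hge : limsup (fun l => u (φ l) α) atTop ≤ Gp α := by
        refine le_csInf (hne_gt α) ?_
        rintro y ⟨q, hq, rfl⟩
        have h1 : g q = limsup (fun l => u (φ l) (q:ℝ)) atTop := (hgφ q).limsup_eq.symm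
        rw [h1]
        refine limsup_le_limsup (Eventually.of_forall fun l => hmono _ (le_of_lt hq))
          ((hbd2 α).isCoboundedUnder_flip)
          (isBoundedUnder_of ⟨1, fun l => (hmem _ _).2⟩)
      have hGpm : Gp α ≤ Gm α := not_lt.mp hαD
      have heq : liminf (fun l => u (φ l) α) atTop = limsup (fun l => u (φ l) α) atTop :=
        le_antisymm (liminf_le_limsup (hbd1 α) (hbd2 α)) (hge.trans (hGpm.trans hle))
      exact ⟨limsup (fun l => u (φ l) α) atTop,
        tendsto_of_liminf_eq_limsup heq rfl (hbd1 α) (hbd2 α)⟩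
  choose G hG using key
  exact ⟨φ, hφ, G, hG⟩

/-- Bolzano–Weierstrass dichotomy. -/
lemma dichotomy_of_sublimits (u : ℕ → ℝ) (hb : ∀ k, u k ∈ Set.Icc (0:ℝ) 1)
    (hsub : ∀ φ : ℕ → ℕ, StrictMono φ → ∀ x : ℝ,
      Tendsto (fun l => u (φ l)) atTop (𝓝 x) → x = 0 ∨ x = 1) :
    Tendsto u atTop (𝓝 0) ∨
      ∃ φ : ℕ → ℕ, StrictMono φ ∧ Tendsto (fun l => u (φ l)) atTop (𝓝 1) := by
  by_cases h : Tendsto u atTop (𝓝 0)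
  · exact Or.inl h
  right
  rw [Metric.tendsto_atTop] at h
  push_neg at h
  obtain ⟨ε, hε, hfreq⟩ := h
  have : ∃ᶠ n in atTop, ε ≤ dist (u n) 0 := by
    rw [frequently_atTop]
    intro N; obtain ⟨n, hn, hd⟩ := hfreq N; exact ⟨n, hn, hd⟩
  obtain ⟨φ, hφ, hφε⟩ := extraction_of_frequently_atTop this
  obtain ⟨a, haI, ψ, hψ, ha⟩ := IsCompact.tendsto_subseq (isCompact_Icc (a := (0:ℝ)) (b := 1))
    (fun l => hb (φ l))
  have ha' : Tendsto (fun l => u (φ (ψ l))) atTop (𝓝 a) := ha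
  have haε : ε ≤ a := by
    refine ge_of_tendsto ha' (Eventually.of_forall fun l => ?_)
    have := hφε (ψ l)
    rwa [Real.dist_eq, sub_zero, abs_of_nonneg (hb _).1] at this
  rcases hsub (φ ∘ ψ) (hφ.comp hψ) a ha' with h0 | h1
  · exact absurd (h0 ▸ haε) (not_le.mpr hε)
  · exact ⟨φ ∘ ψ, hφ.comp hψ, h1 ▸ ha'⟩

/-- If the family `(Z_{k,n})` satisfies AS1 (for every fixed `n`, every
convergent subsequence of `(Z_{k,n})_k` converges in distribution, as `k → ∞`, to a finite
deterministic scalar, i.e. its limiting CDF is a unit step at some `c ∈ ℝ`) and AS2 (for every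
fixed `k`, `Z_{k,n}` converges in distribution as `n → ∞` to `Z_k`, uniformly in `k` and in the
evaluation point), then `lim_{n→∞} (p-liminf_{k→∞} Z_{k,n})` exists and equals
`p-liminf_{k→∞} Z_k`. -/
theorem stmt0 {Ω : Type*} [MeasurableSpace Ω] (μ : Measure Ω) [IsProbabilityMeasure μ]
    (Z : ℕ → ℕ → Ω → ℝ) (Zlim : ℕ → Ω → ℝ)
    (hAS1 : ∀ n : ℕ, ∀ φ : ℕ → ℕ, StrictMono φ → ∀ G : ℝ → ℝ,
      (∀ α : ℝ, Tendsto (fun l => cdfLt μ (Z (φ l) n) α) atTop (nhds (G α))) →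
      ∃ c : ℝ, ∀ α : ℝ, G α = if α ≤ c then 0 else 1)
    (hAS2 : ∀ η : ℝ, 0 < η → ∃ n₀ : ℕ, ∀ n > n₀, ∀ k : ℕ, ∀ α : ℝ,
      |cdfLt μ (Z k n) α - cdfLt μ (Zlim k) α| < η) :
    Tendsto (fun n => pliminf μ (fun k => Z k n)) atTop (nhds (pliminf μ Zlim)) := by
  classical
  -- Every subsequential limit of k ↦ cdfLt μ (Z k n) α is 0 or 1.
  have subl : ∀ (n : ℕ) (φ : ℕ → ℕ), StrictMono φ → ∀ (α x : ℝ),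
      Tendsto (fun l => cdfLt μ (Z (φ l) n) α) atTop (𝓝 x) → x = 0 ∨ x = 1 := by
    intro n φ hφ α x hx
    obtain ⟨ψ, hψ, G, hG⟩ := helly_selection (fun l => cdfLt μ (Z (φ l) n))
      (fun l => cdfLt_mono μ _) (fun l β => cdfLt_mem_Icc μ _ β)
    obtain ⟨c, hc⟩ := hAS1 n (φ ∘ ψ) (hφ.comp hψ) G (fun β => hG β)
    have h1 : Tendsto (fun l => cdfLt μ (Z (φ (ψ l)) n) α) atTop (𝓝 x) :=
      hx.comp hψ.tendsto_atTop
    have h2 : x = G α := tendsto_nhds_unique h1 (hG α)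
    rw [h2, hc α]
    by_cases hα : α ≤ c
    · simp [hα]
    · simp [hα]
  -- Every subsequential limit of k ↦ cdfLt μ (Zlim k) α is 0 or 1.
  have sublLim : ∀ (φ : ℕ → ℕ), StrictMono φ → ∀ (α x : ℝ),
      Tendsto (fun l => cdfLt μ (Zlim (φ l)) α) atTop (𝓝 x) → x = 0 ∨ x = 1 := by
    intro φ hφ α x hx
    have happrox : ∀ η : ℝ, 0 < η → ∃ y : ℝ, (y = 0 ∨ y = 1) ∧ |y - x| ≤ η := by
      intro η hη
      obtain ⟨n₀, hn₀⟩ := hAS2 η hη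
      set n := n₀ + 1 with hn
      obtain ⟨ψ, hψ, G, hG⟩ := helly_selection (fun l => cdfLt μ (Z (φ l) n))
        (fun l => cdfLt_mono μ _) (fun l β => cdfLt_mem_Icc μ _ β)
      obtain ⟨c, hc⟩ := hAS1 n (φ ∘ ψ) (hφ.comp hψ) G (fun β => hG β)
      refine ⟨G α, ?_, ?_⟩
      · rw [hc α]; by_cases hα : α ≤ c
        · simp [hα]
        · simp [hα]
      · have h1 : Tendsto (fun l => cdfLt μ (Z (φ (ψ l)) n) α
            - cdfLt μ (Zlim (φ (ψ l))) α) atTop (𝓝 (G α - x)) :=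
          (hG α).sub (hx.comp hψ.tendsto_atTop)
        have h2 : Tendsto (fun l => |cdfLt μ (Z (φ (ψ l)) n) α
            - cdfLt μ (Zlim (φ (ψ l))) α|) atTop (𝓝 |G α - x|) := h1.abs
        exact le_of_tendsto h2 (Eventually.of_forall fun l =>
          le_of_lt (hn₀ n (Nat.lt_succ_self n₀) (φ (ψ l)) α))
    by_contra hcon
    push_neg at hcon
    obtain ⟨hx0, hx1⟩ := hcon
    set η := min |0 - x| |1 - x| with hηdef
    have hηpos : 0 < η := by
      apply lt_min
      · simpa using abs_pos.mpr (sub_ne_zero.mpr (Ne.symm hx0 ∘ Eq.symm)) |>.trans_eq rfl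
      · exact abs_pos.mpr (sub_ne_zero.mpr fun h => hx1 h.symm)
    obtain ⟨y, hy01, hyx⟩ := happrox (η / 2) (half_pos hηpos)
    have : η ≤ |y - x| := by
      rcases hy01 with rfl | rfl
      · exact min_le_left _ _
      · exact min_le_right _ _
    linarith [this.trans hyx, half_lt_self hηpos]
  -- The two `pliminf` sets agree eventually.
  obtain ⟨n₀, hn₀⟩ := hAS2 (1/3) (by norm_num)
  have key : ∀ n > n₀, pliminf μ (fun k => Z k n) = pliminf μ Zlim := by
    intro n hn
    unfold pliminf
    congr 1
    ext α
    simp only [Set.mem_setOf_eq]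
    constructor
    · intro h
      rcases dichotomy_of_sublimits (fun k => cdfLt μ (Zlim k) α)
          (fun k => cdfLt_mem_Icc μ _ α) (fun φ hφ x hx => sublLim φ hφ α x hx) with h0 | ⟨φ, hφ, h1⟩
      · exact h0
      · exfalso
        have hd : Tendsto (fun l => cdfLt μ (Z (φ l) n) α - cdfLt μ (Zlim (φ l)) α)
            atTop (𝓝 (0 - 1)) := (h.comp hφ.tendsto_atTop).sub h1
        have hda : Tendsto (fun l => |cdfLt μ (Z (φ l) n) α - cdfLt μ (Zlim (φ l)) α|)
            atTop (𝓝 |(0:ℝ) - 1|) := hd.abs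
        have : |(0:ℝ) - 1| ≤ 1/3 :=
          le_of_tendsto hda (Eventually.of_forall fun l => le_of_lt (hn₀ n hn (φ l) α))
        norm_num at this
    · intro h
      rcases dichotomy_of_sublimits (fun k => cdfLt μ (Z k n) α)
          (fun k => cdfLt_mem_Icc μ _ α) (fun φ hφ x hx => subl n φ hφ α x hx) with h0 | ⟨φ, hφ, h1⟩
      · exact h0
      · exfalso
        have hd : Tendsto (fun l => cdfLt μ (Z (φ l) n) α - cdfLt μ (Zlim (φ l)) α)
            atTop (𝓝 (1 - 0)) := h1.sub (h.comp hφ.tendsto_atTop)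
        have hda : Tendsto (fun l => |cdfLt μ (Z (φ l) n) α - cdfLt μ (Zlim (φ l)) α|)
            atTop (𝓝 |(1:ℝ) - 0|) := hd.abs
        have : |(1:ℝ) - 0| ≤ 1/3 :=
          le_of_tendsto hda (Eventually.of_forall fun l => le_of_lt (hn₀ n hn (φ l) α))
        norm_num at this
  have hev : ∀ᶠ n in atTop, pliminf μ Zlim = pliminf μ (fun k => Z k n) :=
    eventually_atTop.mpr ⟨n₀ + 1, fun n hn => (key n (Nat.lt_of_succ_le hn)).symm⟩
  exact Tendsto.congr' hev tendsto_const_nhds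
end

section
/- Let N ∈ ℕ, let σ²[0], …, σ²[N−1] be strictly positive reals, and let P > 0. Then there exists a unique Δ > 0 satisfying the water-filling equation (1/N)·Σ_{i=0}^{N−1} (Δ − σ²[i])^+ = P. -/
/-- For strictly positive noise variances `σ²[0], …, σ²[N−1]` and `P > 0`,
there exists a unique `Δ > 0` satisfying the water-filling equation
`(1/N) ∑_{i<N} (Δ − σ²[i])⁺ = P`. -/
theorem stmt6 (N : ℕ) (hN : 0 < N) (σ2 : ℕ → ℝ)
    (hσ2 : ∀ i < N, 0 < σ2 i) (P : ℝ) (hP : 0 < P) :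
    ∃! Δ : ℝ, 0 < Δ ∧ (1 / (N : ℝ)) * ∑ i ∈ Finset.range N, max (Δ - σ2 i) 0 = P := by
  have hne : (Finset.range N).Nonempty := Finset.nonempty_range_iff.mpr hN.ne'
  have hNpos : (0:ℝ) < (N:ℝ) := Nat.cast_pos.mpr hN
  have key : ∀ x y : ℝ, x < y →
      (1 / (N : ℝ)) * ∑ i ∈ Finset.range N, max (x - σ2 i) 0 = P →
      (1 / (N : ℝ)) * ∑ i ∈ Finset.range N, max (x - σ2 i) 0 <
      (1 / (N : ℝ)) * ∑ i ∈ Finset.range N, max (y - σ2 i) 0 := by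
    intro x y hxy hx
    have hsum : 0 < ∑ i ∈ Finset.range N, max (x - σ2 i) 0 := by
      by_contra h
      push_neg at h
      have h0 : ∑ i ∈ Finset.range N, max (x - σ2 i) 0 = 0 :=
        le_antisymm h (Finset.sum_nonneg fun i _ => le_max_right _ _)
      rw [h0, mul_zero] at hx
      exact absurd hx.symm hP.ne'
    obtain ⟨i0, hi0, hpos⟩ : ∃ i ∈ Finset.range N, 0 < max (x - σ2 i) 0 := by
      by_contra h
      push_neg at h
      have : ∑ i ∈ Finset.range N, max (x - σ2 i) 0 ≤ 0 :=
        Finset.sum_nonpos fun i hi => h i hi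
      linarith
    have hx0 : σ2 i0 < x := by
      by_contra h
      push_neg at h
      have : max (x - σ2 i0) 0 = 0 := max_eq_right (by linarith)
      rw [this] at hpos; exact lt_irrefl _ hpos
    have hlt : ∑ i ∈ Finset.range N, max (x - σ2 i) 0 <
        ∑ i ∈ Finset.range N, max (y - σ2 i) 0 := by
      apply Finset.sum_lt_sum
      · intro i _; exact max_le_max (by linarith) le_rfl
      · refine ⟨i0, hi0, ?_⟩
        rw [max_eq_left (by linarith : (0:ℝ) ≤ x - σ2 i0),
            max_eq_left (by linarith : (0:ℝ) ≤ y - σ2 i0)]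
        linarith
    exact mul_lt_mul_of_pos_left hlt (by positivity)
  set f : ℝ → ℝ := fun Δ => (1 / (N : ℝ)) * ∑ i ∈ Finset.range N, max (Δ - σ2 i) 0 with hfdef
  set m := (Finset.range N).inf' hne σ2 with hm
  set b := (Finset.range N).sup' hne σ2 + (N:ℝ) * P with hb
  have hmpos : 0 < m := (Finset.lt_inf'_iff hne).mpr fun i hi => hσ2 i (Finset.mem_range.mp hi)
  have hmb : m ≤ b := by
    obtain ⟨i, hi⟩ := hne.exists_mem
    have h1 : m ≤ σ2 i := Finset.inf'_le _ hi
    have h2 : σ2 i ≤ (Finset.range N).sup' hne σ2 := Finset.le_sup' _ hi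
    nlinarith
  have hcont : Continuous f := by
    apply continuous_const.mul
    exact continuous_finset_sum _ fun i _ => (continuous_id.sub continuous_const).max continuous_const
  have hfm : f m = 0 := by
    simp only [hfdef]
    rw [Finset.sum_eq_zero, mul_zero]
    intro i hi
    exact max_eq_right (sub_nonpos.mpr (Finset.inf'_le _ hi))
  have hfb : P ≤ f b := by
    have hsum : (N:ℝ) * ((N:ℝ) * P) ≤ ∑ i ∈ Finset.range N, max (b - σ2 i) 0 := by
      calc (N:ℝ) * ((N:ℝ)*P) = ∑ _i ∈ Finset.range N, (N:ℝ)*P := by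
            rw [Finset.sum_const, Finset.card_range]; ring
        _ ≤ _ := Finset.sum_le_sum fun i hi => le_max_of_le_left (by
            have := Finset.le_sup' σ2 hi
            simp only [hb]; linarith)
    have h2 : (1/(N:ℝ)) * ((N:ℝ)*((N:ℝ)*P)) ≤ f b := by
      simp only [hfdef]
      exact mul_le_mul_of_nonneg_left hsum (by positivity)
    have hNP : (1/(N:ℝ)) * ((N:ℝ)*((N:ℝ)*P)) = (N:ℝ)*P := by field_simp
    have h1 : P ≤ (N:ℝ)*P := le_mul_of_one_le_left hP.le (by exact_mod_cast hN)
    linarith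
  obtain ⟨Δ, hΔmem, hΔ⟩ := intermediate_value_Icc hmb hcont.continuousOn
    ⟨by rw [hfm]; exact hP.le, hfb⟩
  refine ⟨Δ, ⟨lt_of_lt_of_le hmpos hΔmem.1, hΔ⟩, ?_⟩
  rintro y ⟨hy0, hyP⟩
  by_contra hney
  rcases lt_or_gt_of_ne hney with h | h
  · have := key y Δ h hyP
    rw [hyP] at this
    have hΔ' : f Δ = P := hΔ
    simp only [hfdef] at hΔ'
    rw [hΔ'] at this
    exact lt_irrefl _ this
  · have hΔ' : f Δ = P := hΔ
    simp only [hfdef] at hΔ'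
    have := key Δ y h hΔ'
    rw [hΔ', hyP] at this
    exact lt_irrefl _ this
end

section
/- Assume in addition that 1/(2π) < C(t) < ∞ for all t ∈ ℝ. For irrational ε ∈ (0,1) set ε_n = ⌊n·ε⌋/n, σ_n²[i] = C(i·T_c/(p+ε_n)), and σ_ε²[i] = C(i·T_c/(p+ε)). For k ∈ ℕ and w ∈ ℝ^k let f_{k,n}(w) = Π_{i=1}^{k} (2π·σ_n²[i])^{−1/2}·exp(−w_i²/(2σ_n²[i])) be the density of the Gaussian vector W_n^{(k)} with independent entries, and f_k(w) the analogous density of W_ε^{(k)}. Then f_{k,n} converges to f_k as n→∞ uniformly in w ∈ ℝ^k and in k ∈ ℕ: for every η > 0 there exists n_0(η) such that |f_{k,n}(w) − f_k(w)| < η for all n > n_0(η), all k ∈ ℕ, and all w ∈ ℝ^k. -/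
open MeasureTheory Filter Topology

/-- The scalar zero-mean Gaussian density with variance `v`:
`(2πv)^{−1/2}·exp(−x²/(2v))`. -/
noncomputable def gpdf (v x : ℝ) : ℝ :=
  (Real.sqrt (2 * Real.pi * v))⁻¹ * Real.exp (-(x ^ 2) / (2 * v))

/-- The density of the `k`-dimensional zero-mean Gaussian vector with independent entries of
variances `σ2 1, …, σ2 k`, evaluated at `w ∈ ℝ^k`. -/
noncomputable def gaussVecPdf (σ2 : ℕ → ℝ) (k : ℕ) (w : Fin k → ℝ) : ℝ :=
  ∏ i : Fin k, gpdf (σ2 ((i : ℕ) + 1)) (w i)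

lemma gpdf_pos {v : ℝ} (hv : 0 < v) (x : ℝ) : 0 < gpdf v x := by
  have h : 0 < 2 * Real.pi * v := by positivity
  have := Real.sqrt_pos.mpr h
  unfold gpdf
  positivity

lemma gpdf_le {m v : ℝ} (hm : 0 < m) (hmv : m ≤ v) (x : ℝ) :
    gpdf v x ≤ (Real.sqrt (2 * Real.pi * m))⁻¹ := by
  have hv : 0 < v := lt_of_lt_of_le hm hmv
  have h1 : Real.exp (-(x ^ 2) / (2 * v)) ≤ 1 := by
    rw [Real.exp_le_one_iff]
    have : 0 ≤ x ^ 2 / (2 * v) := by positivity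
    linarith [this, (neg_div (2*v) (x^2))]
  have h2 : (Real.sqrt (2 * Real.pi * v))⁻¹ ≤ (Real.sqrt (2 * Real.pi * m))⁻¹ := by
    apply inv_anti₀
    · exact Real.sqrt_pos.mpr (by positivity)
    · exact Real.sqrt_le_sqrt (by nlinarith [Real.pi_pos])
  calc gpdf v x ≤ (Real.sqrt (2 * Real.pi * v))⁻¹ * 1 := by
        unfold gpdf
        apply mul_le_mul_of_nonneg_left h1
        positivity
    _ = (Real.sqrt (2 * Real.pi * v))⁻¹ := mul_one _
    _ ≤ _ := h2

lemma gpdf_le_one {v : ℝ} (hv : 1 / (2 * Real.pi) ≤ v) (x : ℝ) : gpdf v x ≤ 1 := by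
  have hπ := Real.pi_pos
  have hm : (0:ℝ) < 1 / (2 * Real.pi) := by positivity
  have := gpdf_le hm hv x
  have h1 : 2 * Real.pi * (1 / (2 * Real.pi)) = 1 := by field_simp
  rw [h1, Real.sqrt_one, inv_one] at this
  exact this

set_option maxHeartbeats 800000 in
lemma gpdf_lip_ord {m v v' : ℝ} (hm : 1 / (2 * Real.pi) ≤ m) (hv : m ≤ v) (hvv : v ≤ v')
    (x : ℝ) : |gpdf v x - gpdf v' x| ≤ (Real.pi + 1 / m) * |v - v'| := by
  have hπ := Real.pi_pos
  have hm0 : (0:ℝ) < m := lt_of_lt_of_le (by positivity) hm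
  have hv0 : 0 < v := lt_of_lt_of_le hm0 hv
  have hv'0 : 0 < v' := lt_of_lt_of_le hv0 hvv
  set a := 2 * Real.pi * v with ha
  set b := 2 * Real.pi * v' with hb
  have ha1 : 1 ≤ a := by
    rw [ha]; rw [div_le_iff₀ (by positivity)] at hm; nlinarith
  have hab : a ≤ b := by nlinarith
  have hb1 : 1 ≤ b := le_trans ha1 hab
  have hsa : 1 ≤ Real.sqrt a := by
    rw [show (1:ℝ) = Real.sqrt 1 by simp]; exact Real.sqrt_le_sqrt ha1
  have hsb : 1 ≤ Real.sqrt b := by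
    rw [show (1:ℝ) = Real.sqrt 1 by simp]; exact Real.sqrt_le_sqrt hb1
  have hsab : Real.sqrt a ≤ Real.sqrt b := Real.sqrt_le_sqrt hab
  have hsa2 : Real.sqrt a ^ 2 = a := Real.sq_sqrt (by linarith)
  have hsb2 : Real.sqrt b ^ 2 = b := Real.sq_sqrt (by linarith)
  -- A-bounds
  set A := (Real.sqrt a)⁻¹ with hA
  set B := (Real.sqrt b)⁻¹ with hB
  have hA1 : A ≤ 1 := by rw [hA]; exact inv_le_one_of_one_le₀ hsa
  have hB1 : B ≤ 1 := by rw [hB]; exact inv_le_one_of_one_le₀ hsb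
  have hA0 : 0 < A := by rw [hA]; positivity
  have hB0 : 0 < B := by rw [hB]; positivity
  have hBA : B ≤ A := by
    rw [hA, hB]; exact inv_anti₀ (by linarith) hsab
  have hAdiff : A - B ≤ Real.pi * (v' - v) := by
    have h1 : Real.sqrt b - Real.sqrt a ≤ (b - a) / 2 := by
      nlinarith [hsa, hsb, hsab, hsa2, hsb2]
    have h2 : A - B = (Real.sqrt b - Real.sqrt a) / (Real.sqrt a * Real.sqrt b) := by
      rw [hA, hB]
      field_simp
    rw [h2]
    have h3 : (Real.sqrt b - Real.sqrt a) / (Real.sqrt a * Real.sqrt b)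
        ≤ Real.sqrt b - Real.sqrt a := by
      rw [div_le_iff₀ (by nlinarith)]
      nlinarith [mul_nonneg (sub_nonneg.mpr hsab)
        (by nlinarith : (0:ℝ) ≤ Real.sqrt a * Real.sqrt b - 1)]
    have h4 : b - a = 2 * Real.pi * (v' - v) := by rw [ha, hb]; ring
    nlinarith
  -- E-bounds
  set u := x ^ 2 with hu
  have hu0 : 0 ≤ u := sq_nonneg x
  set s := u / (2 * v') with hs
  set t := u / (2 * v) with ht
  have hst : s ≤ t := by
    rw [hs, ht]
    apply div_le_div_of_nonneg_left hu0 (by positivity) (by linarith)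
  have hs0 : 0 ≤ s := by positivity
  set Ev := Real.exp (-(x ^ 2) / (2 * v)) with hEv
  set Ev' := Real.exp (-(x ^ 2) / (2 * v')) with hEv'
  have hEvt : Ev = Real.exp (-t) := by rw [hEv, ht, neg_div]
  have hEvs : Ev' = Real.exp (-s) := by rw [hEv', hs, neg_div]
  have hEord : Ev ≤ Ev' := by
    rw [hEvt, hEvs]; exact Real.exp_le_exp.mpr (by linarith)
  have hEv0 : 0 < Ev := Real.exp_pos _
  have hEv'1 : Ev' ≤ 1 := by
    rw [hEvs, Real.exp_le_one_iff]; linarith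
  have hEdiff : Ev' - Ev ≤ (v' - v) / m := by
    have h1 : Ev' - Ev ≤ Real.exp (-s) * (t - s) := by
      rw [hEvt, hEvs]
      have h2 : Real.exp (-t) = Real.exp (-s) * Real.exp (-(t - s)) := by
        rw [← Real.exp_add]; ring_nf
      rw [h2]
      have h3 : 1 - (t - s) ≤ Real.exp (-(t - s)) := by
        have := Real.add_one_le_exp (-(t - s)); linarith
      have h4 : 0 < Real.exp (-s) := Real.exp_pos _
      nlinarith
    have hses : Real.exp (-s) * s ≤ 1 := by
      have h5 : s ≤ Real.exp s := by
        have := Real.add_one_le_exp s; linarith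
      have h6 : Real.exp (-s) * Real.exp s = 1 := by
        rw [← Real.exp_add]; simp
      nlinarith [Real.exp_pos (-s)]
    have hkey0 : t - s = s * ((v' - v) / v) := by
      rw [hs, ht]
      field_simp
    have hkey : Real.exp (-s) * (t - s) = (Real.exp (-s) * s) * ((v' - v) / v) := by
      rw [hkey0]; ring
    have h7 : (Real.exp (-s) * s) * ((v' - v) / v) ≤ (v' - v) / v := by
      have : 0 ≤ (v' - v) / v := div_nonneg (by linarith) hv0.le
      nlinarith [Real.exp_pos (-s), mul_nonneg (Real.exp_pos (-s)).le hs0]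
    have h8 : (v' - v) / v ≤ (v' - v) / m := by
      apply div_le_div_of_nonneg_left (by linarith) hm0 hv
    linarith
  have hEdiff0 : 0 ≤ Ev' - Ev := by linarith
  have hAdiff0 : 0 ≤ A - B := by linarith
  -- combine
  have hexpr : gpdf v x - gpdf v' x = A * Ev - B * Ev' := by
    unfold gpdf; rw [hA, hB, hEv, hEv', ha, hb]
  have hEv'0 : 0 < Ev' := by rw [hEvs]; exact Real.exp_pos _
  clear_value u s t a b A B Ev Ev'
  have habs : |v - v'| = v' - v := by rw [abs_of_nonpos (by linarith)]; ring
  rw [hexpr, habs, abs_le]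
  have hdm : (0:ℝ) ≤ (v' - v) / m := div_nonneg (by linarith) hm0.le
  have h4 : (Real.pi + 1 / m) * (v' - v) = Real.pi * (v' - v) + (v' - v) / m := by
    field_simp
  rw [h4]
  have hq1 : 0 ≤ (1 - A) * (Ev' - Ev) := mul_nonneg (by linarith) hEdiff0
  have hq2 : 0 ≤ (A - B) * Ev' := mul_nonneg hAdiff0 hEv'0.le
  have hq3 : 0 ≤ Real.pi * (v' - v) := mul_nonneg hπ.le (by linarith)
  have hq4 : 0 ≤ (A - B) * (1 - Ev) := mul_nonneg hAdiff0 (by linarith)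
  have hq5 : 0 ≤ B * (Ev' - Ev) := mul_nonneg hB0.le hEdiff0
  constructor
  · linarith only [hq1, hq2, hq3, hEdiff, hdm]
  · linarith only [hq4, hq5, hAdiff, hdm]

lemma gpdf_lip {m v v' : ℝ} (hm : 1 / (2 * Real.pi) ≤ m) (hv : m ≤ v) (hv' : m ≤ v')
    (x : ℝ) : |gpdf v x - gpdf v' x| ≤ (Real.pi + 1 / m) * |v - v'| := by
  rcases le_total v v' with h | h
  · exact gpdf_lip_ord hm hv h x
  · rw [abs_sub_comm, abs_sub_comm v v']
    exact gpdf_lip_ord hm hv' h x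

lemma abs_prod_sub_prod_le {ι : Type*} (s : Finset ι) (f g : ι → ℝ)
    (hf0 : ∀ i ∈ s, 0 ≤ f i) (hf1 : ∀ i ∈ s, f i ≤ 1)
    (hg0 : ∀ i ∈ s, 0 ≤ g i) (hg1 : ∀ i ∈ s, g i ≤ 1) :
    |∏ i ∈ s, f i - ∏ i ∈ s, g i| ≤ ∑ i ∈ s, |f i - g i| := by
  induction s using Finset.cons_induction with
  | empty => simp
  | cons a s ha ih =>
    rw [Finset.prod_cons, Finset.prod_cons, Finset.sum_cons]
    have hf0' : ∀ i ∈ s, 0 ≤ f i := fun i hi => hf0 i (Finset.mem_cons_of_mem hi)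
    have hf1' : ∀ i ∈ s, f i ≤ 1 := fun i hi => hf1 i (Finset.mem_cons_of_mem hi)
    have hg0' : ∀ i ∈ s, 0 ≤ g i := fun i hi => hg0 i (Finset.mem_cons_of_mem hi)
    have hg1' : ∀ i ∈ s, g i ≤ 1 := fun i hi => hg1 i (Finset.mem_cons_of_mem hi)
    have ihs := ih hf0' hf1' hg0' hg1'
    have hfa0 := hf0 a (Finset.mem_cons_self a s)
    have hfa1 := hf1 a (Finset.mem_cons_self a s)
    have hg_prod0 : 0 ≤ ∏ i ∈ s, g i := Finset.prod_nonneg hg0'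
    have hg_prod1 : ∏ i ∈ s, g i ≤ 1 := Finset.prod_le_one hg0' hg1'
    calc |f a * ∏ i ∈ s, f i - g a * ∏ i ∈ s, g i|
        = |f a * (∏ i ∈ s, f i - ∏ i ∈ s, g i) + (f a - g a) * ∏ i ∈ s, g i| := by
          ring_nf
      _ ≤ |f a * (∏ i ∈ s, f i - ∏ i ∈ s, g i)| + |(f a - g a) * ∏ i ∈ s, g i| :=
          abs_add_le _ _
      _ ≤ |f a - g a| + ∑ i ∈ s, |f i - g i| := by
          rw [abs_mul, abs_mul]
          have h1 : |f a| * |∏ i ∈ s, f i - ∏ i ∈ s, g i| ≤ ∑ i ∈ s, |f i - g i| := by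
            calc |f a| * |∏ i ∈ s, f i - ∏ i ∈ s, g i|
                ≤ 1 * |∏ i ∈ s, f i - ∏ i ∈ s, g i| := by
                  apply mul_le_mul_of_nonneg_right _ (abs_nonneg _)
                  rw [abs_of_nonneg hfa0]; exact hfa1
              _ = |∏ i ∈ s, f i - ∏ i ∈ s, g i| := one_mul _
              _ ≤ _ := ihs
          have h2 : |f a - g a| * |∏ i ∈ s, g i| ≤ |f a - g a| := by
            calc |f a - g a| * |∏ i ∈ s, g i| ≤ |f a - g a| * 1 := by
                  apply mul_le_mul_of_nonneg_left _ (abs_nonneg _)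
                  rw [abs_of_nonneg hg_prod0]; exact hg_prod1
              _ = |f a - g a| := mul_one _
          linarith

lemma eps_tendsto {ε : ℝ} (hε0 : 0 < ε) :
    Filter.Tendsto (fun n : ℕ => (⌊(n : ℝ) * ε⌋ : ℝ) / (n : ℝ)) Filter.atTop (nhds ε) := by
  apply tendsto_of_tendsto_of_tendsto_of_le_of_le'
      (g := fun n : ℕ => ε - 1 / (n : ℝ)) (h := fun _ : ℕ => ε)
  · have h1 : Filter.Tendsto (fun n : ℕ => 1 / (n : ℝ)) Filter.atTop (nhds 0) :=
      tendsto_one_div_atTop_nhds_zero_nat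
    have := (tendsto_const_nhds (x := ε) (f := Filter.atTop (α := ℕ))).sub h1
    simpa using this
  · exact tendsto_const_nhds
  · filter_upwards [Filter.eventually_ge_atTop 1] with n hn
    have hn0 : (0:ℝ) < (n : ℝ) := by exact_mod_cast Nat.lt_of_lt_of_le Nat.zero_lt_one hn
    rw [le_div_iff₀ hn0]
    have := Int.sub_one_lt_floor ((n : ℝ) * ε)
    have h2 : ((n:ℝ) * ε - 1) ≤ (⌊(n : ℝ) * ε⌋ : ℝ) := by linarith
    have h3 : (ε - 1 / (n:ℝ)) * (n:ℝ) = (n:ℝ) * ε - 1 := by field_simp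
    linarith
  · filter_upwards [Filter.eventually_ge_atTop 1] with n hn
    have hn0 : (0:ℝ) < (n : ℝ) := by exact_mod_cast Nat.lt_of_lt_of_le Nat.zero_lt_one hn
    rw [div_le_iff₀ hn0]
    have := Int.floor_le ((n : ℝ) * ε)
    linarith

/-- Assume `1/(2π) < C(t)` for all `t` (in addition to continuity, strict
positivity and `T_c`-periodicity of `C`).  For irrational `ε ∈ (0,1)` put `ε_n = ⌊n·ε⌋/n`,
`σ_n²[i] = C(i·T_c/(p+ε_n))` and `σ_ε²[i] = C(i·T_c/(p+ε))`.  Then the densities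
`f_{k,n}(w) = ∏_{i=1}^{k} (2π σ_n²[i])^{−1/2} exp(−w_i²/(2σ_n²[i]))` of `W_n^{(k)}` converge to
the densities `f_k` of `W_ε^{(k)}` as `n → ∞`, uniformly in `w ∈ ℝ^k` and in `k ∈ ℕ`. -/
theorem stmt9 (C : ℝ → ℝ) (T_c : ℝ) (hT : 0 < T_c)
    (hC_cont : Continuous C) (hC_pos : ∀ t, 0 < C t)
    (hC_per : ∀ t, C (t + T_c) = C t)
    (hC_lo : ∀ t, 1 / (2 * Real.pi) < C t)
    (p : ℕ) (hp : 0 < p) (ε : ℝ) (hε0 : 0 < ε) (hε1 : ε < 1) (hirr : Irrational ε) :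
    ∀ η > (0 : ℝ), ∃ n₀ : ℕ, ∀ n > n₀, ∀ (k : ℕ) (w : Fin k → ℝ),
      |gaussVecPdf (fun i : ℕ =>
          C ((i : ℝ) * T_c / ((p : ℝ) + (⌊(n : ℝ) * ε⌋ : ℝ) / (n : ℝ)))) k w -
        gaussVecPdf (fun i : ℕ => C ((i : ℝ) * T_c / ((p : ℝ) + ε))) k w| < η := by
  intro η hη
  have hπ := Real.pi_pos
  have hper : Function.Periodic C T_c := hC_per
  obtain ⟨t₀, _, hmin⟩ := isCompact_Icc.exists_isMinOn
    ⟨0, Set.left_mem_Icc.mpr hT.le⟩ hC_cont.continuousOn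
  set m := C t₀ with hm_def
  have hm_all : ∀ t, m ≤ C t := by
    intro t
    obtain ⟨y, hy, hxy⟩ := hper.exists_mem_Ico₀ hT t
    rw [hxy]
    exact hmin (Set.Ico_subset_Icc_self hy)
  have hm_lo : 1 / (2 * Real.pi) < m := hC_lo t₀
  have hm_pos : 0 < m := hC_pos t₀
  set q := (Real.sqrt (2 * Real.pi * m))⁻¹ with hq_def
  have h2πm : 1 < 2 * Real.pi * m := by
    rw [div_lt_iff₀ (by positivity)] at hm_lo; linarith
  have hsq : 1 < Real.sqrt (2 * Real.pi * m) := by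
    rw [show (1:ℝ) = Real.sqrt 1 by simp]
    exact Real.sqrt_lt_sqrt (by norm_num) h2πm
  have hq_pos : 0 < q := by
    rw [hq_def]; exact inv_pos.mpr (by linarith)
  have hq_lt : q < 1 := by
    rw [hq_def]; exact inv_lt_one_of_one_lt₀ hsq
  obtain ⟨K, hK⟩ := exists_pow_lt_of_lt_one (half_pos hη) hq_lt
  set L := Real.pi + 1 / m with hL_def
  have hL : 0 < L := by rw [hL_def]; positivity
  have hden : (0:ℝ) < ((K:ℝ) + 1) * L + 1 := by
    have h1 : (0:ℝ) < (K:ℝ) + 1 := by positivity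
    nlinarith
  set δ := η / (((K:ℝ) + 1) * L + 1) with hδ_def
  have hδ : 0 < δ := div_pos hη hden
  -- eventual closeness of the variances, for indices up to K
  have hev : ∀ᶠ n : ℕ in Filter.atTop, ∀ i ∈ Finset.range (K + 1),
      |C ((i:ℝ) * T_c / ((p:ℝ) + (⌊(n:ℝ) * ε⌋ : ℝ) / (n:ℝ))) -
        C ((i:ℝ) * T_c / ((p:ℝ) + ε))| < δ := by
    rw [Filter.eventually_all_finset]
    intro i _
    have hpε : (0:ℝ) < (p:ℝ) + ε := by positivity
    have hcont : ContinuousAt (fun e : ℝ => C ((i:ℝ) * T_c / ((p:ℝ) + e))) ε := by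
      apply hC_cont.continuousAt.comp
      exact continuousAt_const.div (continuousAt_const.add continuousAt_id) hpε.ne'
    have htend := hcont.tendsto.comp (eps_tendsto hε0)
    obtain ⟨N, hN⟩ := Metric.tendsto_atTop.mp htend δ hδ
    rw [Filter.eventually_atTop]
    exact ⟨N, fun n hn => by simpa [Real.dist_eq] using hN n hn⟩
  obtain ⟨n₀, hn₀⟩ := Filter.eventually_atTop.mp hev
  refine ⟨n₀, ?_⟩
  intro n hn k w
  have hclose := hn₀ n hn.le
  set σn : ℕ → ℝ := fun i : ℕ =>
    C ((i:ℝ) * T_c / ((p:ℝ) + (⌊(n:ℝ) * ε⌋ : ℝ) / (n:ℝ))) with hσn_def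
  set σ : ℕ → ℝ := fun i : ℕ => C ((i:ℝ) * T_c / ((p:ℝ) + ε)) with hσ_def
  have hσn_m : ∀ i : ℕ, m ≤ σn i := fun i => hm_all _
  have hσ_m : ∀ i : ℕ, m ≤ σ i := fun i => hm_all _
  rcases le_or_gt K k with hKk | hkK
  · -- tail bound: both densities are ≤ q^k ≤ q^K < η/2
    have hbound : ∀ (τ : ℕ → ℝ), (∀ i, m ≤ τ i) →
        0 ≤ gaussVecPdf τ k w ∧ gaussVecPdf τ k w ≤ q ^ k := by
      intro τ hτ
      constructor
      · exact Finset.prod_nonneg fun i _ =>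
          (gpdf_pos (lt_of_lt_of_le hm_pos (hτ _)) _).le
      · calc gaussVecPdf τ k w ≤ ∏ _i : Fin k, q :=
              Finset.prod_le_prod
                (fun i _ => (gpdf_pos (lt_of_lt_of_le hm_pos (hτ _)) _).le)
                (fun i _ => gpdf_le hm_pos (hτ _) _)
          _ = q ^ k := by simp
    obtain ⟨h10, h1q⟩ := hbound σn hσn_m
    obtain ⟨h20, h2q⟩ := hbound σ hσ_m
    have hqk : q ^ k ≤ q ^ K := pow_le_pow_of_le_one hq_pos.le hq_lt.le hKk
    calc |gaussVecPdf σn k w - gaussVecPdf σ k w|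
        ≤ |gaussVecPdf σn k w| + |gaussVecPdf σ k w| := abs_sub _ _
      _ = gaussVecPdf σn k w + gaussVecPdf σ k w := by
          rw [abs_of_nonneg h10, abs_of_nonneg h20]
      _ ≤ q ^ k + q ^ k := add_le_add h1q h2q
      _ ≤ q ^ K + q ^ K := add_le_add hqk hqk
      _ < η := by linarith
  · -- head: k < K, use Lipschitz estimate termwise
    have h01 : ∀ (τ : ℕ → ℝ), (∀ i, m ≤ τ i) → ∀ i : Fin k,
        0 ≤ gpdf (τ ((i:ℕ) + 1)) (w i) ∧ gpdf (τ ((i:ℕ) + 1)) (w i) ≤ 1 := by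
      intro τ hτ i
      exact ⟨(gpdf_pos (lt_of_lt_of_le hm_pos (hτ _)) _).le,
        gpdf_le_one (le_trans hm_lo.le (hτ _)) _⟩
    have hsum : |gaussVecPdf σn k w - gaussVecPdf σ k w| ≤
        ∑ i : Fin k, |gpdf (σn ((i:ℕ) + 1)) (w i) - gpdf (σ ((i:ℕ) + 1)) (w i)| := by
      apply abs_prod_sub_prod_le
      · exact fun i _ => (h01 σn hσn_m i).1
      · exact fun i _ => (h01 σn hσn_m i).2
      · exact fun i _ => (h01 σ hσ_m i).1
      · exact fun i _ => (h01 σ hσ_m i).2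
    have hterm : ∀ i : Fin k,
        |gpdf (σn ((i:ℕ) + 1)) (w i) - gpdf (σ ((i:ℕ) + 1)) (w i)| ≤ L * δ := by
      intro i
      have hlip := gpdf_lip hm_lo.le (hσn_m ((i:ℕ) + 1)) (hσ_m ((i:ℕ) + 1)) (w i)
      have hmem : (i:ℕ) + 1 ∈ Finset.range (K + 1) := by
        rw [Finset.mem_range]
        have := i.isLt
        omega
      have hc := hclose ((i:ℕ) + 1) hmem
      rw [← hL_def] at hlip
      calc |gpdf (σn ((i:ℕ) + 1)) (w i) - gpdf (σ ((i:ℕ) + 1)) (w i)|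
          ≤ L * |σn ((i:ℕ) + 1) - σ ((i:ℕ) + 1)| := hlip
        _ ≤ L * δ := mul_le_mul_of_nonneg_left (le_of_lt hc) hL.le
    have hsum2 : ∑ i : Fin k, |gpdf (σn ((i:ℕ) + 1)) (w i) - gpdf (σ ((i:ℕ) + 1)) (w i)|
        ≤ (k:ℝ) * (L * δ) := by
      calc _ ≤ ∑ _i : Fin k, L * δ := Finset.sum_le_sum fun i _ => hterm i
        _ = (k:ℝ) * (L * δ) := by simp [mul_comm]
    have hkK' : (k:ℝ) ≤ (K:ℝ) := by exact_mod_cast hkK.le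
    have hηeq : (((K:ℝ) + 1) * L + 1) * δ = η := by
      rw [hδ_def]; field_simp
    have hfin : (k:ℝ) * (L * δ) < η := by
      have h1 : (k:ℝ) * (L * δ) ≤ (K:ℝ) * (L * δ) :=
        mul_le_mul_of_nonneg_right hkK' (mul_nonneg hL.le hδ.le)
      nlinarith [mul_nonneg hL.le hδ.le]
    linarith [le_trans hsum hsum2]
end

section
/- Let A and B be independent real-valued zero-mean Gaussian random variables with variances σ_A² and σ_B², and let β ∈ ℝ. Then the random variable V = (1/2)·A·B + (1/2)·β has characteristic function Φ_V(α) = e^{i·β·α/2} / √( α²·σ_A²·σ_B²/4 + 1 ) for every α ∈ ℝ. -/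
open MeasureTheory ProbabilityTheory
open scoped NNReal
open Complex
open scoped Real ENNReal

lemma gauss_char (v : ℝ≥0) (t : ℝ) :
    ∫ x : ℝ, Complex.exp (Complex.I * (t * x : ℝ)) ∂(gaussianReal 0 v)
      = (Real.exp (-(v : ℝ) * t ^ 2 / 2) : ℝ) := by
  rcases eq_or_ne v 0 with rfl | hv
  · simp [gaussianReal_zero_var]
  · rw [gaussianReal_of_var_ne_zero _ hv]
    set f : ℝ → ℝ≥0 := fun x => (gaussianPDFReal 0 v x).toNNReal with hf
    have hpdf : gaussianPDF 0 v = fun x => (f x : ℝ≥0∞) := rfl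
    rw [hpdf, integral_withDensity_eq_integral_smul
      ((measurable_gaussianPDFReal 0 v).real_toNNReal)]
    have hv' : (0:ℝ) < (v:ℝ) := by positivity
    have hsmul : ∀ x : ℝ, f x • Complex.exp (Complex.I * (t * x : ℝ))
        = ((Real.sqrt (2 * π * v))⁻¹ : ℝ) *
          Complex.exp ((-(1/(2*(v:ℝ))) : ℂ) * (x:ℂ) ^ 2 + (t * Complex.I) * x + 0) := by
      intro x
      rw [NNReal.smul_def, Complex.real_smul, hf]
      simp only [Real.coe_toNNReal _ (gaussianPDFReal_nonneg 0 v x)]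
      rw [gaussianPDFReal]
      push_cast
      rw [mul_assoc]
      congr 1
      rw [← Complex.exp_add]
      congr 1
      ring
    change ∫ x : ℝ, f x • _ ∂_ = _
    simp only [hsmul]
    rw [integral_const_mul, integral_cexp_quadratic (by
      simp only [Complex.neg_re, Complex.ofReal_re]
      norm_num; positivity)]
    have h2v : (0:ℝ) < 2 * π * v := by positivity
    have hpow : ((π : ℂ) / -(-(1/(2*(v:ℝ))) : ℂ)) ^ (1/2 : ℂ) = (Real.sqrt (2 * π * v) : ℂ) := by
      have : ((π : ℂ) / -(-(1/(2*(v:ℝ))) : ℂ)) = ((2 * π * v : ℝ) : ℂ) := by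
        push_cast; field_simp
      rw [this, show (1/2 : ℂ) = ((1/2 : ℝ) : ℂ) by norm_num, ← Complex.ofReal_cpow h2v.le,
        Real.sqrt_eq_rpow]
    rw [hpow]
    have hexp : (0 : ℂ) - (t * Complex.I)^2 / (4 * (-(1/(2*(v:ℝ))) : ℂ))
        = ((-(v:ℝ) * t^2/2 : ℝ) : ℂ) := by
      have : (Complex.I)^2 = -1 := Complex.I_sq
      push_cast
      field_simp
      ring_nf
      rw [Complex.I_sq]
      ring
    rw [hexp, ← Complex.ofReal_exp]
    have hs : Real.sqrt (2*π*v) ≠ 0 := by positivity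
    rw [← mul_assoc]
    norm_cast
    rw [inv_mul_cancel₀ hs, one_mul]

lemma gauss_sq (v : ℝ≥0) (c : ℝ) (hc : 0 ≤ c) :
    ∫ x : ℝ, Real.exp (-(c * x ^ 2)) ∂(gaussianReal 0 v)
      = 1 / Real.sqrt (2 * v * c + 1) := by
  rcases eq_or_ne v 0 with rfl | hv
  · simp [gaussianReal_zero_var]
  · rw [gaussianReal_of_var_ne_zero _ hv]
    set f : ℝ → ℝ≥0 := fun x => (gaussianPDFReal 0 v x).toNNReal with hf
    have hpdf : gaussianPDF 0 v = fun x => (f x : ℝ≥0∞) := rfl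
    rw [hpdf, integral_withDensity_eq_integral_smul
      ((measurable_gaussianPDFReal 0 v).real_toNNReal)]
    have hv' : (0:ℝ) < (v:ℝ) := by positivity
    have hb : (0:ℝ) < c + 1/(2*(v:ℝ)) := by positivity
    have hsmul : ∀ x : ℝ, f x • Real.exp (-(c * x ^ 2))
        = ((Real.sqrt (2 * π * v))⁻¹ : ℝ) * Real.exp (-(c + 1/(2*(v:ℝ))) * x ^ 2) := by
      intro x
      rw [NNReal.smul_def, smul_eq_mul, hf]
      simp only [Real.coe_toNNReal _ (gaussianPDFReal_nonneg 0 v x)]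
      rw [gaussianPDFReal, mul_assoc, ← Real.exp_add]
      congr 2
      field_simp
      ring
    change ∫ x : ℝ, f x • _ ∂_ = _
    simp only [hsmul]
    rw [integral_const_mul, integral_gaussian]
    rw [← Real.sqrt_inv, ← Real.sqrt_mul (by positivity)]
    rw [show (2 * π * (v:ℝ))⁻¹ * (π / (c + 1/(2*(v:ℝ)))) = (2 * v * c + 1)⁻¹ by
      field_simp]
    rw [Real.sqrt_inv, one_div]

lemma prod_char (v1 v2 : ℝ≥0) (t : ℝ) :
    ∫ p : ℝ × ℝ, Complex.exp (Complex.I * (t * (p.1 * p.2) : ℝ))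
        ∂((gaussianReal 0 v1).prod (gaussianReal 0 v2))
      = ((1 / Real.sqrt ((v1:ℝ) * v2 * t ^ 2 + 1) : ℝ) : ℂ) := by
  have hmeas : Measurable fun p : ℝ × ℝ =>
      Complex.exp (Complex.I * (t * (p.1 * p.2) : ℝ)) := by fun_prop
  have hint : Integrable (fun p : ℝ × ℝ => Complex.exp (Complex.I * (t * (p.1 * p.2) : ℝ)))
      ((gaussianReal 0 v1).prod (gaussianReal 0 v2)) := by
    refine (integrable_const (1:ℝ)).mono' hmeas.aestronglyMeasurable ?_
    filter_upwards with p
    rw [Complex.norm_exp]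
    simp [mul_comm]
  rw [integral_prod _ hint]
  have hin : ∀ a : ℝ, (∫ b : ℝ, Complex.exp (Complex.I * (t * (a * b) : ℝ))
      ∂(gaussianReal 0 v2)) = ((Real.exp (-((v2:ℝ) * t^2 / 2) * a ^ 2) : ℝ) : ℂ) := by
    intro a
    have := gauss_char v2 (t * a)
    simp only [show ∀ b : ℝ, t * (a * b) = (t * a) * b by intro b; ring] at *
    rw [this]
    norm_num
    ring_nf
  simp only [hin]
  simp_rw [← Complex.coe_algebraMap, RCLike.algebraMap_eq_ofReal, integral_ofReal]
  norm_cast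
  have := gauss_sq v1 ((v2:ℝ) * t^2 / 2) (by positivity)
  simp only [neg_mul] at this ⊢
  rw [this]
  congr 2
  push_cast
  ring

/-- If `A` and `B` are independent real zero-mean Gaussian random variables
with variances `σ_A²` and `σ_B²`, and `β ∈ ℝ`, then `V = (1/2)·A·B + (1/2)·β` has
characteristic function `Φ_V(α) = e^{i·β·α/2} / √(α²·σ_A²·σ_B²/4 + 1)` for every `α ∈ ℝ`. -/
theorem stmt16 {Ω : Type*} [MeasureSpace Ω] [IsProbabilityMeasure (ℙ : Measure Ω)]
    (A B : Ω → ℝ) (hmA : Measurable A) (hmB : Measurable B)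
    (σA2 σB2 : ℝ) (hA2 : 0 ≤ σA2) (hB2 : 0 ≤ σB2)
    (hA : Measure.map A ℙ = gaussianReal 0 σA2.toNNReal)
    (hB : Measure.map B ℙ = gaussianReal 0 σB2.toNNReal)
    (hAB : IndepFun A B ℙ)
    (β : ℝ) :
    ∀ α : ℝ,
      (∫ ω, Complex.exp (Complex.I * (α * ((1 / 2) * A ω * B ω + (1 / 2) * β) : ℝ)) ∂ℙ) =
        Complex.exp (Complex.I * ((β * α / 2 : ℝ))) /
          (Real.sqrt (α ^ 2 * σA2 * σB2 / 4 + 1) : ℝ) := by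
  intro α
  have hmap : Measure.map (fun ω => (A ω, B ω)) ℙ
      = (gaussianReal 0 σA2.toNNReal).prod (gaussianReal 0 σB2.toNNReal) := by
    rw [← hA, ← hB]
    exact (indepFun_iff_map_prod_eq_prod_map_map hmA.aemeasurable hmB.aemeasurable).mp hAB
  have hsplit : ∀ ω, Complex.I * ((α * ((1 / 2) * A ω * B ω + (1 / 2) * β) : ℝ) : ℂ)
      = Complex.I * ((β * α / 2 : ℝ) : ℂ)
        + Complex.I * (((α / 2) * (A ω * B ω) : ℝ) : ℂ) := by
    intro ω; push_cast; ring
  simp_rw [hsplit, Complex.exp_add, integral_const_mul]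
  have hpair : AEMeasurable (fun ω => (A ω, B ω)) ℙ := (hmA.prodMk hmB).aemeasurable
  have hmeas : Measurable fun p : ℝ × ℝ =>
      Complex.exp (Complex.I * ((α / 2) * (p.1 * p.2) : ℝ)) := by fun_prop
  have hInt : (∫ ω, Complex.exp (Complex.I * (((α / 2) * (A ω * B ω) : ℝ) : ℂ)) ∂ℙ)
      = ∫ p : ℝ × ℝ, Complex.exp (Complex.I * ((α / 2) * (p.1 * p.2) : ℝ))
          ∂((gaussianReal 0 σA2.toNNReal).prod (gaussianReal 0 σB2.toNNReal)) := by
    rw [← hmap, integral_map hpair hmeas.aestronglyMeasurable]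
  rw [hInt, prod_char]
  rw [Real.coe_toNNReal _ hA2, Real.coe_toNNReal _ hB2]
  rw [show σA2 * σB2 * (α / 2) ^ 2 + 1 = α ^ 2 * σA2 * σB2 / 4 + 1 by ring]
  push_cast
  rw [mul_one_div]
end

section
/- Let X and W be independent real-valued zero-mean Gaussian random variables with variances σ_X² > 0 and σ_W² > 0, let Y = X + W and σ_Y² = σ_X² + σ_W². Then the random variables A = Y/σ_Y + W/σ_W and B = Y/σ_Y − W/σ_W are jointly Gaussian, uncorrelated, and independent, and the mutual information density of the scalar Gaussian channel satisfies log( p_{Y|X}(Y|X) / p_Y(Y) ) = (1/2)·A·B + (1/2)·log( σ_Y² / σ_W² ). -/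
open MeasureTheory ProbabilityTheory
open scoped NNReal

section Aux

open Real
open scoped ENNReal Real

lemma aux_pdf_rotation {p q v1 v2 Δ c1 c2 d1 d2 : ℝ} (hp : 0 < p) (hq : 0 < q)
    (hv1 : v1 = c1^2*p + c2^2*q) (hv2 : v2 = d1^2*p + d2^2*q) (hΔ : Δ = c1*d2 - c2*d1)
    (horth : c1*d1*p + c2*d2*q = 0) (hdet : Δ ≠ 0) (x w : ℝ) :
    |Δ|⁻¹ * (gaussianPDFReal 0 p.toNNReal x * gaussianPDFReal 0 q.toNNReal w)
      = gaussianPDFReal 0 v1.toNNReal (c1*x+c2*w)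
          * gaussianPDFReal 0 v2.toNNReal (d1*x+d2*w) := by
  have hc : c1 ≠ 0 ∨ c2 ≠ 0 := by
    by_contra h
    push_neg at h
    exact hdet (by rw [hΔ, h.1, h.2]; ring)
  have hd : d1 ≠ 0 ∨ d2 ≠ 0 := by
    by_contra h
    push_neg at h
    exact hdet (by rw [hΔ, h.1, h.2]; ring)
  have hv1pos : 0 < v1 := by
    rcases hc with h | h
    · nlinarith [sq_nonneg c2, sq_nonneg c1, pow_pos (abs_pos.mpr h) 2, sq_abs c1]
    · nlinarith [sq_nonneg c1, pow_pos (abs_pos.mpr h) 2, sq_abs c2]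
  have hv2pos : 0 < v2 := by
    rcases hd with h | h
    · nlinarith [sq_nonneg d2, pow_pos (abs_pos.mpr h) 2, sq_abs d1]
    · nlinarith [sq_nonneg d1, pow_pos (abs_pos.mpr h) 2, sq_abs d2]
  have hcp : ((p.toNNReal : ℝ)) = p := Real.coe_toNNReal p hp.le
  have hcq : ((q.toNNReal : ℝ)) = q := Real.coe_toNNReal q hq.le
  have hcv1 : ((v1.toNNReal : ℝ)) = v1 := Real.coe_toNNReal v1 hv1pos.le
  have hcv2 : ((v2.toNNReal : ℝ)) = v2 := Real.coe_toNNReal v2 hv2pos.le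
  have hnum : ((c1*x+c2*w)^2*v2 + (d1*x+d2*w)^2*v1) * (p*q) = (x^2*q + w^2*p) * (v1*v2) := by
    subst hv1 hv2
    linear_combination (p*q*(2*c1*d1*x^2 + 2*(c2*d1+c1*d2)*x*w + 2*c2*d2*w^2)
      - (x^2*q + w^2*p)*(c1*d1*p + c2*d2*q)) * horth
  have hE : x^2/(2*p) + w^2/(2*q) = (c1*x+c2*w)^2/(2*v1) + (d1*x+d2*w)^2/(2*v2) := by
    rw [div_add_div _ _ (by positivity : (2:ℝ)*p ≠ 0) (by positivity : (2:ℝ)*q ≠ 0),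
      div_add_div _ _ (by positivity : (2:ℝ)*v1 ≠ 0) (by positivity : (2:ℝ)*v2 ≠ 0),
      div_eq_div_iff (by positivity) (by positivity)]
    linear_combination -8*hnum
  have hC : Real.sqrt (2*π*v1) * Real.sqrt (2*π*v2) = |Δ| * (Real.sqrt (2*π*p) * Real.sqrt (2*π*q)) := by
    rw [← Real.sqrt_mul (by positivity) (2*π*v2), ← Real.sqrt_mul (by positivity) (2*π*q),
      ← Real.sqrt_sq_eq_abs, ← Real.sqrt_mul (by positivity) (2*π*p*(2*π*q))]
    congr 1
    subst hv1 hv2 hΔ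
    linear_combination ((2*π)^2*(c1*d1*p+c2*d2*q)) * horth
  simp only [gaussianPDFReal, sub_zero, hcp, hcq, hcv1, hcv2]
  have e1 : Real.exp (-(x^2) / (2*p)) * Real.exp (-(w^2)/(2*q))
      = Real.exp (-(c1*x+c2*w)^2/(2*v1)) * Real.exp (-(d1*x+d2*w)^2/(2*v2)) := by
    rw [← Real.exp_add, ← Real.exp_add]
    congr 1
    rw [neg_div, neg_div, neg_div, neg_div]
    linarith [hE]
  have h2 : |Δ|⁻¹ * ((Real.sqrt (2*π*p))⁻¹ * Real.exp (-(x^2) / (2*p))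
        * ((Real.sqrt (2*π*q))⁻¹ * Real.exp (-(w^2)/(2*q))))
      = (|Δ| * (Real.sqrt (2*π*p) * Real.sqrt (2*π*q)))⁻¹
        * (Real.exp (-(x^2) / (2*p)) * Real.exp (-(w^2)/(2*q))) := by
    rw [mul_inv, mul_inv]; ring
  rw [h2, ← hC, e1, mul_inv]
  ring


lemma aux_map_withDensity {α β : Type*} [MeasurableSpace α] [MeasurableSpace β]
    (e : α ≃ᵐ β) (μ : Measure α) {f : β → ℝ≥0∞} (hf : Measurable f) :
    Measure.map e (μ.withDensity fun x => f (e x)) = (Measure.map e μ).withDensity f := by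
  ext s hs
  rw [Measure.map_apply e.measurable hs, withDensity_apply _ (e.measurable hs),
    withDensity_apply _ hs, setLIntegral_map hs hf e.measurable]

lemma aux_smul_withDensity {α : Type*} [MeasurableSpace α] (c : ℝ≥0∞) (μ : Measure α)
    {f : α → ℝ≥0∞} (hf : Measurable f) :
    (c • μ).withDensity f = μ.withDensity (fun x => c * f x) := by
  ext s hs
  rw [withDensity_apply _ hs, withDensity_apply _ hs, Measure.restrict_smul,
    lintegral_smul_measure, lintegral_const_mul c hf, smul_eq_mul]

lemma aux_prod_gaussian (p q : ℝ≥0) (hp : p ≠ 0) (hq : q ≠ 0) :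
    (gaussianReal 0 p).prod (gaussianReal 0 q)
      = (volume : Measure (ℝ × ℝ)).withDensity
          (fun r => gaussianPDF 0 p r.1 * gaussianPDF 0 q r.2) := by
  refine Measure.prod_eq fun s t hs ht => ?_
  rw [withDensity_apply _ (hs.prod ht), Measure.volume_eq_prod, ← Measure.prod_restrict,
    lintegral_prod_mul (measurable_gaussianPDF 0 p).aemeasurable
      (measurable_gaussianPDF 0 q).aemeasurable,
    gaussianReal_apply _ hp s, gaussianReal_apply _ hq t]

lemma aux_master {Ω : Type*} [MeasureSpace Ω] [IsProbabilityMeasure (ℙ : Measure Ω)]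
    (X W : Ω → ℝ) (hmX : Measurable X) (hmW : Measurable W)
    {p q : ℝ} (hp : 0 < p) (hq : 0 < q)
    (hX : Measure.map X ℙ = gaussianReal 0 p.toNNReal)
    (hW : Measure.map W ℙ = gaussianReal 0 q.toNNReal)
    (hXW : IndepFun X W ℙ) (c1 c2 d1 d2 : ℝ)
    (horth : c1*d1*p + c2*d2*q = 0) (hdet : c1*d2 - c2*d1 ≠ 0) :
    Measure.map (fun ω => (c1 * X ω + c2 * W ω, d1 * X ω + d2 * W ω)) ℙ
      = (gaussianReal 0 (c1^2*p + c2^2*q).toNNReal).prod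
          (gaussianReal 0 (d1^2*p + d2^2*q).toNNReal) := by
  have hpdf := aux_pdf_rotation (v1 := c1^2*p + c2^2*q) (v2 := d1^2*p + d2^2*q)
    (Δ := c1*d2 - c2*d1) hp hq rfl rfl rfl horth hdet
  -- positivity of image variances
  have hc : c1 ≠ 0 ∨ c2 ≠ 0 := by
    by_contra h; push_neg at h; exact hdet (by rw [h.1, h.2]; ring)
  have hd : d1 ≠ 0 ∨ d2 ≠ 0 := by
    by_contra h; push_neg at h; exact hdet (by rw [h.1, h.2]; ring)
  have hv1pos : 0 < c1^2*p + c2^2*q := by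
    rcases hc with h | h
    · nlinarith [sq_nonneg c2, pow_pos (abs_pos.mpr h) 2, sq_abs c1]
    · nlinarith [sq_nonneg c1, pow_pos (abs_pos.mpr h) 2, sq_abs c2]
  have hv2pos : 0 < d1^2*p + d2^2*q := by
    rcases hd with h | h
    · nlinarith [sq_nonneg d2, pow_pos (abs_pos.mpr h) 2, sq_abs d1]
    · nlinarith [sq_nonneg d1, pow_pos (abs_pos.mpr h) 2, sq_abs d2]
  -- the linear map
  set M : Matrix (Fin 2) (Fin 2) ℝ := !![c1, c2; d1, d2] with hM
  have hMdet : M.det = c1*d2 - c2*d1 := by simp [hM, Matrix.det_fin_two_of]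
  set L : (ℝ × ℝ) →ₗ[ℝ] (ℝ × ℝ) := Matrix.toLin (Module.Basis.finTwoProd ℝ) (Module.Basis.finTwoProd ℝ) M
    with hL
  have hLdet : LinearMap.det L = c1*d2 - c2*d1 := by rw [hL, LinearMap.det_toLin, hMdet]
  let e : (ℝ × ℝ) ≃ₗ[ℝ] (ℝ × ℝ) :=
    Matrix.toLinearEquiv (Module.Basis.finTwoProd ℝ) M (isUnit_iff_ne_zero.2 (hMdet ▸ hdet))
  have he : ∀ r : ℝ × ℝ, e r = (c1*r.1 + c2*r.2, d1*r.1 + d2*r.2) := by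
    intro r
    show Matrix.toLin (Module.Basis.finTwoProd ℝ) (Module.Basis.finTwoProd ℝ) M r = _
    rw [hM]
    exact Matrix.toLin_finTwoProd_apply c1 c2 d1 d2 r
  let em : (ℝ × ℝ) ≃ᵐ (ℝ × ℝ) := e.toContinuousLinearEquiv.toHomeomorph.toMeasurableEquiv
  have hem : ∀ r, em r = e r := fun r => rfl
  have hfun : ⇑em = ⇑L := rfl
  have hmapvol : Measure.map (⇑em) (volume : Measure (ℝ × ℝ))
      = ENNReal.ofReal |(c1*d2 - c2*d1)⁻¹| • volume := by
    rw [hfun]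
    have := Measure.map_linearMap_addHaar_eq_smul_addHaar (volume : Measure (ℝ × ℝ))
      (f := L) (by rw [hLdet]; exact hdet)
    rwa [hLdet] at this
  have hjoint : Measure.map (fun ω => (X ω, W ω)) ℙ
      = (gaussianReal 0 p.toNNReal).prod (gaussianReal 0 q.toNNReal) := by
    have := (indepFun_iff_map_prod_eq_prod_map_map hmX.aemeasurable hmW.aemeasurable).mp hXW
    rwa [hX, hW] at this
  have hp' : p.toNNReal ≠ 0 := (Real.toNNReal_pos.mpr hp).ne'
  have hq' : q.toNNReal ≠ 0 := (Real.toNNReal_pos.mpr hq).ne'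
  have hv1' : (c1^2*p + c2^2*q).toNNReal ≠ 0 := (Real.toNNReal_pos.mpr hv1pos).ne'
  have hv2' : (d1^2*p + d2^2*q).toNNReal ≠ 0 := (Real.toNNReal_pos.mpr hv2pos).ne'
  set g : ℝ × ℝ → ℝ≥0∞ :=
    fun r => gaussianPDF 0 p.toNNReal r.1 * gaussianPDF 0 q.toNNReal r.2 with hgdef
  have hg : Measurable g :=
    ((measurable_gaussianPDF _ _).comp measurable_fst).mul
      ((measurable_gaussianPDF _ _).comp measurable_snd)
  have hcomp : (fun ω => (c1*X ω + c2*W ω, d1*X ω + d2*W ω))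
      = (⇑em) ∘ (fun ω => (X ω, W ω)) := by
    funext ω
    rw [Function.comp_apply, hem, he]
  rw [hcomp, ← Measure.map_map em.measurable (hmX.prodMk hmW), hjoint,
    aux_prod_gaussian _ _ hp' hq', ← hgdef]
  have hgsymm : Measurable fun r => g (em.symm r) := hg.comp em.symm.measurable
  have hstep : volume.withDensity g
      = volume.withDensity (fun x => (fun r => g (em.symm r)) (em x)) := by
    congr 1
    funext x
    simp
  rw [hstep, aux_map_withDensity em _ hgsymm, hmapvol, aux_smul_withDensity _ _ hgsymm,
    aux_prod_gaussian _ _ hv1' hv2']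
  congr 1
  funext r
  have hr : (c1*(em.symm r).1 + c2*(em.symm r).2, d1*(em.symm r).1 + d2*(em.symm r).2) = r := by
    rw [← he (em.symm r), ← hem (em.symm r)]
    exact em.apply_symm_apply r
  have hpdfr := hpdf (em.symm r).1 (em.symm r).2
  rw [hgdef]
  simp only [gaussianPDF_def]
  rw [← ENNReal.ofReal_mul (gaussianPDFReal_nonneg _ _ _),
    ← ENNReal.ofReal_mul (by positivity), abs_inv, hpdfr,
    ENNReal.ofReal_mul (gaussianPDFReal_nonneg _ _ _),
    show c1*(em.symm r).1 + c2*(em.symm r).2 = r.1 from congrArg Prod.fst hr,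
    show d1*(em.symm r).1 + d2*(em.symm r).2 = r.2 from congrArg Prod.snd hr]

end Aux

/-- Let `X` and `W` be independent real zero-mean Gaussian random variables
with variances `σ_X² > 0` and `σ_W² > 0`, let `Y = X + W` and `σ_Y² = σ_X² + σ_W²`.  Then
`A = Y/σ_Y + W/σ_W` and `B = Y/σ_Y − W/σ_W` are jointly Gaussian (every linear combination of
them is Gaussian), uncorrelated, and independent, and the mutual information density of the
scalar Gaussian channel satisfies
`log(p_{Y|X}(Y|X)/p_Y(Y)) = (1/2)·A·B + (1/2)·log(σ_Y²/σ_W²)`,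
where `p_{Y|X}(y|x) = p_W(y−x)` is the zero-mean Gaussian density with variance `σ_W²` and
`p_Y` is the zero-mean Gaussian density with variance `σ_Y²`. -/
theorem stmt17 {Ω : Type*} [MeasureSpace Ω] [IsProbabilityMeasure (ℙ : Measure Ω)]
    (X W : Ω → ℝ) (hmX : Measurable X) (hmW : Measurable W)
    (σX2 σW2 : ℝ) (hX2 : 0 < σX2) (hW2 : 0 < σW2)
    (hX : Measure.map X ℙ = gaussianReal 0 σX2.toNNReal)
    (hW : Measure.map W ℙ = gaussianReal 0 σW2.toNNReal)
    (hXW : IndepFun X W ℙ)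
    (σY2 : ℝ) (hσY2 : σY2 = σX2 + σW2)
    (A B : Ω → ℝ)
    (hA : ∀ ω, A ω = (X ω + W ω) / Real.sqrt σY2 + W ω / Real.sqrt σW2)
    (hB : ∀ ω, B ω = (X ω + W ω) / Real.sqrt σY2 - W ω / Real.sqrt σW2) :
    (∀ a b : ℝ, ∃ (m : ℝ) (v : ℝ≥0),
        Measure.map (fun ω => a * A ω + b * B ω) ℙ = gaussianReal m v) ∧
    (∫ ω, A ω * B ω ∂ℙ) = (∫ ω, A ω ∂ℙ) * (∫ ω, B ω ∂ℙ) ∧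
    IndepFun A B ℙ ∧
    (∀ ω, Real.log (gpdf σW2 (W ω) / gpdf σY2 (X ω + W ω)) =
      (1 / 2) * A ω * B ω + (1 / 2) * Real.log (σY2 / σW2)) := by

  have hY2pos : 0 < σY2 := by rw [hσY2]; linarith
  set sY := Real.sqrt σY2 with hsYdef
  set sW := Real.sqrt σW2 with hsWdef
  have hsY : sY^2 = σY2 := Real.sq_sqrt hY2pos.le
  have hsW : sW^2 = σW2 := Real.sq_sqrt hW2.le
  have hsYpos : 0 < sY := Real.sqrt_pos.mpr hY2pos
  have hsWpos : 0 < sW := Real.sqrt_pos.mpr hW2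
  have hX2' : σX2 = sY^2 - sW^2 := by rw [hsY, hsW, hσY2]; ring
  have hA' : A = fun ω => sY⁻¹ * X ω + (sY⁻¹ + sW⁻¹) * W ω :=
    funext fun ω => by rw [hA ω]; ring
  have hB' : B = fun ω => sY⁻¹ * X ω + (sY⁻¹ - sW⁻¹) * W ω :=
    funext fun ω => by rw [hB ω]; ring
  have hmA : Measurable A := hA' ▸ ((hmX.const_mul _).add (hmW.const_mul _))
  have hmB : Measurable B := hB' ▸ ((hmX.const_mul _).add (hmW.const_mul _))
  have horth : sY⁻¹*sY⁻¹*σX2 + (sY⁻¹ + sW⁻¹)*(sY⁻¹ - sW⁻¹)*σW2 = 0 := by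
    rw [hX2', ← hsW]
    field_simp
    ring
  have hdet : sY⁻¹*(sY⁻¹ - sW⁻¹) - (sY⁻¹ + sW⁻¹)*sY⁻¹ ≠ 0 := by
    have h : sY⁻¹*(sY⁻¹ - sW⁻¹) - (sY⁻¹ + sW⁻¹)*sY⁻¹ = -(2*(sY⁻¹*sW⁻¹)) := by ring
    rw [h]
    have : 0 < 2*(sY⁻¹*sW⁻¹) := by positivity
    linarith
  have hABjoint : Measure.map (fun ω => (A ω, B ω)) ℙ
      = (gaussianReal 0 ((sY⁻¹)^2*σX2 + (sY⁻¹+sW⁻¹)^2*σW2).toNNReal).prod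
        (gaussianReal 0 ((sY⁻¹)^2*σX2 + (sY⁻¹-sW⁻¹)^2*σW2).toNNReal) := by
    have h := aux_master X W hmX hmW hX2 hW2 hX hW hXW
      (sY⁻¹) (sY⁻¹+sW⁻¹) (sY⁻¹) (sY⁻¹-sW⁻¹) horth hdet
    rw [hA', hB']
    exact h
  have hmapA : Measure.map A ℙ
      = gaussianReal 0 ((sY⁻¹)^2*σX2 + (sY⁻¹+sW⁻¹)^2*σW2).toNNReal := by
    have h1 : Measure.map A ℙ
        = Measure.map Prod.fst (Measure.map (fun ω => (A ω, B ω)) ℙ) :=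
      (Measure.map_map measurable_fst (hmA.prodMk hmB)).symm
    rw [h1, hABjoint, Measure.map_fst_prod]
    simp
  have hmapB : Measure.map B ℙ
      = gaussianReal 0 ((sY⁻¹)^2*σX2 + (sY⁻¹-sW⁻¹)^2*σW2).toNNReal := by
    have h1 : Measure.map B ℙ
        = Measure.map Prod.snd (Measure.map (fun ω => (A ω, B ω)) ℙ) :=
      (Measure.map_map measurable_snd (hmA.prodMk hmB)).symm
    rw [h1, hABjoint, Measure.map_snd_prod]
    simp
  have hindep : IndepFun A B ℙ :=
    (indepFun_iff_map_prod_eq_prod_map_map hmA.aemeasurable hmB.aemeasurable).mpr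
      (by rw [hABjoint, hmapA, hmapB])
  refine ⟨?_, ?_, hindep, ?_⟩
  · -- joint Gaussianity
    intro a b
    have hfun : (fun ω => a * A ω + b * B ω)
        = fun ω => (a*sY⁻¹ + b*sY⁻¹) * X ω + (a*(sY⁻¹+sW⁻¹) + b*(sY⁻¹-sW⁻¹)) * W ω := by
      funext ω
      rw [hA ω, hB ω]
      ring
    by_cases h0 : a*sY⁻¹ + b*sY⁻¹ = 0 ∧ a*(sY⁻¹+sW⁻¹) + b*(sY⁻¹-sW⁻¹) = 0
    · refine ⟨0, 0, ?_⟩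
      rw [hfun, h0.1, h0.2]
      simp only [zero_mul, add_zero]
      rw [Measure.map_const]
      simp
    · set u1 := a*sY⁻¹ + b*sY⁻¹ with hu1
      set u2 := a*(sY⁻¹+sW⁻¹) + b*(sY⁻¹-sW⁻¹) with hu2
      have hu : u1 ≠ 0 ∨ u2 ≠ 0 := by
        rcases not_and_or.mp h0 with h | h
        · exact Or.inl h
        · exact Or.inr h
      have hpos : 0 < u1^2*σX2 + u2^2*σW2 := by
        rcases hu with h | h
        · nlinarith [sq_nonneg u2, pow_pos (abs_pos.mpr h) 2, sq_abs u1]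
        · nlinarith [sq_nonneg u1, pow_pos (abs_pos.mpr h) 2, sq_abs u2]
      have horth' : u1*(-u2*σW2)*σX2 + u2*(u1*σX2)*σW2 = 0 := by ring
      have hdet' : u1*(u1*σX2) - u2*(-u2*σW2) ≠ 0 := by
        have h : u1*(u1*σX2) - u2*(-u2*σW2) = u1^2*σX2 + u2^2*σW2 := by ring
        rw [h]
        exact hpos.ne'
      have hjj := aux_master X W hmX hmW hX2 hW2 hX hW hXW
        u1 u2 (-u2*σW2) (u1*σX2) horth' hdet'
      refine ⟨0, (u1^2*σX2 + u2^2*σW2).toNNReal, ?_⟩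
      have hmf : Measurable (fun ω => u1 * X ω + u2 * W ω) :=
        (hmX.const_mul _).add (hmW.const_mul _)
      have hmg : Measurable (fun ω => (-u2*σW2) * X ω + (u1*σX2) * W ω) :=
        (hmX.const_mul _).add (hmW.const_mul _)
      have h1 : Measure.map (fun ω => u1 * X ω + u2 * W ω) ℙ
          = Measure.map Prod.fst (Measure.map
              (fun ω => (u1 * X ω + u2 * W ω, (-u2*σW2) * X ω + (u1*σX2) * W ω)) ℙ) :=
        (Measure.map_map measurable_fst (hmf.prodMk hmg)).symm
      rw [hfun, h1, hjj, Measure.map_fst_prod]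
      simp
  · -- uncorrelated
    exact hindep.integral_fun_mul_eq_mul_integral hmA.aestronglyMeasurable hmB.aestronglyMeasurable
  · -- information density identity
    intro ω
    have hgpos : ∀ v x : ℝ, 0 < v → 0 < gpdf v x := by
      intro v x hv
      unfold gpdf
      have h2 : 0 < 2 * Real.pi * v := by positivity
      positivity
    have hlogg : ∀ v x : ℝ, 0 < v →
        Real.log (gpdf v x) = -(Real.log (2*Real.pi*v))/2 + (-(x^2)/(2*v)) := by
      intro v x hv
      unfold gpdf
      rw [Real.log_mul (by positivity) (Real.exp_ne_zero _), Real.log_inv, Real.log_exp,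
        Real.log_sqrt (by positivity)]
      ring
    have hABval : A ω * B ω = (X ω + W ω)^2/σY2 - (W ω)^2/σW2 := by
      rw [hA ω, hB ω, ← hsY, ← hsW]
      field_simp
      ring
    have hlog2 : Real.log (σY2/σW2)
        = Real.log (2*Real.pi*σY2) - Real.log (2*Real.pi*σW2) := by
      rw [Real.log_div hY2pos.ne' hW2.ne', Real.log_mul (by positivity) hY2pos.ne',
        Real.log_mul (by positivity) hW2.ne']
      ring
    rw [Real.log_div (hgpos _ _ hW2).ne' (hgpos _ _ hY2pos).ne',
      hlogg _ _ hW2, hlogg _ _ hY2pos, hlog2,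
      show (1:ℝ)/2 * A ω * B ω = 1/2 * (A ω * B ω) by ring, hABval]
    ring
end
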